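/- Let H be a real Hilbert space, (T_n)_{n≥0} a sequence of nonexpansive operators T_n : H → H, and S := ∩_{n≥0} Fix T_n ≠ ∅. Let (x_n)_{n≥0} be a bounded sequence in H with ‖x_n − T_n x_n‖ → 0 as n → +∞, and suppose the following asymptotic condition holds: for any subsequence (x_{n_k})_{k≥0} of (x_n)_{n≥0} converging weakly to some x ∈ H (i.e., ⟨x_{n_k}, z⟩ → ⟨x, z⟩ for all z ∈ H) with x_{n_k} − T_{n_k} x_{n_k} → 0 strongly, one has x ∈ S. Let x̄ ∈ S be the element of S with minimum norm, i.e., x̄ ∈ S and ‖x̄‖ ≤ ‖y‖ for all y ∈ S. Then limsup_{n→+∞} ⟨−x̄, x_n − x̄⟩ ≤ 0. -/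

import Mathlib

open scoped RealInnerProductSpace
open Filter Topology

section Aux

variable {H : Type*} [NormedAddCommGroup H] [InnerProductSpace ℝ H]

/-- Norm identity for convex combinations. -/
private lemma combo_norm_sq (p x y : H) (t : ℝ) :
    ‖p - (x + t • (y - x))‖ ^ 2
      = (1 - t) * ‖p - x‖ ^ 2 + t * ‖p - y‖ ^ 2 - t * (1 - t) * ‖x - y‖ ^ 2 := by
  have h1 : p - (x + t • (y - x)) = (p - x) - t • (y - x) := by
    rw [sub_add_eq_sub_sub]
  have h2 : p - y = (p - x) - (y - x) := by abel
  have h3 : ‖x - y‖ = ‖y - x‖ := norm_sub_rev x y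
  rw [h1, h2, h3]
  set a := p - x with ha
  set b := y - x with hb
  rw [norm_sub_sq_real a (t • b), norm_sub_sq_real a b, real_inner_smul_right, norm_smul,
    mul_pow, Real.norm_eq_abs, sq_abs]
  ring

/-- The fixed point set of a nonexpansive map is convex. -/
private lemma fix_convex (T : H → H) (hT : ∀ a b, ‖T a - T b‖ ≤ ‖a - b‖)
    (x y : H) (hx : T x = x) (hy : T y = y) (t : ℝ) (ht0 : 0 ≤ t) (ht1 : t ≤ 1) :
    T (x + t • (y - x)) = x + t • (y - x) := by
  set z := x + t • (y - x) with hz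
  have hzx : ‖z - x‖ = t * ‖y - x‖ := by
    have : z - x = t • (y - x) := by rw [hz]; abel
    rw [this, norm_smul, Real.norm_eq_abs, abs_of_nonneg ht0]
  have hzy : ‖z - y‖ = (1 - t) * ‖y - x‖ := by
    have : z - y = (t - 1) • (y - x) := by
      rw [hz, sub_smul, one_smul]; abel
    rw [this, norm_smul, Real.norm_eq_abs, abs_of_nonpos (by linarith), neg_sub]
  have h1 : ‖T z - x‖ ≤ t * ‖y - x‖ := by
    calc ‖T z - x‖ = ‖T z - T x‖ := by rw [hx]
    _ ≤ ‖z - x‖ := hT z x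
    _ = t * ‖y - x‖ := hzx
  have h2 : ‖T z - y‖ ≤ (1 - t) * ‖y - x‖ := by
    calc ‖T z - y‖ = ‖T z - T y‖ := by rw [hy]
    _ ≤ ‖z - y‖ := hT z y
    _ = (1 - t) * ‖y - x‖ := hzy
  have h1' : ‖T z - x‖ ^ 2 ≤ (t * ‖y - x‖) ^ 2 :=
    pow_le_pow_left₀ (norm_nonneg _) h1 2
  have h2' : ‖T z - y‖ ^ 2 ≤ ((1 - t) * ‖y - x‖) ^ 2 :=
    pow_le_pow_left₀ (norm_nonneg _) h2 2
  have hxy : ‖x - y‖ = ‖y - x‖ := norm_sub_rev x y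
  have hkey : ‖T z - z‖ ^ 2 ≤ 0 := by
    have hcombo := combo_norm_sq (T z) x y t
    rw [← hz] at hcombo
    have e1 : (1 - t) * ‖T z - x‖ ^ 2 ≤ (1 - t) * (t * ‖y - x‖) ^ 2 :=
      mul_le_mul_of_nonneg_left h1' (by linarith)
    have e2 : t * ‖T z - y‖ ^ 2 ≤ t * ((1 - t) * ‖y - x‖) ^ 2 :=
      mul_le_mul_of_nonneg_left h2' ht0
    rw [hcombo, hxy]
    nlinarith [sq_nonneg ‖y - x‖]
  have : ‖T z - z‖ = 0 :=
    le_antisymm (by nlinarith [norm_nonneg (T z - z)]) (norm_nonneg _)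
  exact sub_eq_zero.mp (norm_eq_zero.mp this)

/-- Weak sequential compactness of bounded sequences in a Hilbert space. -/
private lemma exists_weak_subseq [CompleteSpace H] (u : ℕ → H) (M : ℝ)
    (hu : ∀ n, ‖u n‖ ≤ M) :
    ∃ φ : ℕ → ℕ, StrictMono φ ∧ ∃ x : H,
      ∀ z : H, Tendsto (fun k => ⟪u (φ k), z⟫) atTop (𝓝 ⟪x, z⟫) := by
  set M' : ℝ := max M 0 with hM'
  have hM'0 : 0 ≤ M' := le_max_right _ _
  have hu' : ∀ n, ‖u n‖ ≤ M' := fun n => (hu n).trans (le_max_left _ _)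
  -- the closed subspace generated by the sequence
  set K : Submodule ℝ H := (Submodule.span ℝ (Set.range u)).topologicalClosure with hK
  have huK : ∀ n, u n ∈ K :=
    fun n => Submodule.le_topologicalClosure _ (Submodule.subset_span (Set.mem_range_self n))
  -- separability: countable dense sequence in K
  have hsep : TopologicalSpace.IsSeparable (K : Set H) := by
    have h1 : TopologicalSpace.IsSeparable
        ((Submodule.span ℝ (Set.range u) : Submodule ℝ H) : Set H) :=
      TopologicalSpace.IsSeparable.span (Set.countable_range u).isSeparable
    have h2 : (K : Set H) = closure ((Submodule.span ℝ (Set.range u) : Submodule ℝ H) : Set H) :=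
      rfl
    rw [h2]
    exact h1.closure
  obtain ⟨c, hc_count, hc_sub⟩ := hsep
  obtain ⟨z, hz⟩ := (hc_count.insert (0 : H)).exists_eq_range (Set.insert_nonempty _ _)
  have hdense : ∀ w ∈ (K : Set H), w ∈ closure (Set.range z) := by
    intro w hw
    rw [← hz]
    exact closure_mono (Set.subset_insert _ _) (hc_sub hw)
  -- diagonal extraction via compactness of a product of intervals
  set g : ℕ → ℕ → ℝ := fun n j => ⟪u n, z j⟫ with hg
  have hgmem : ∀ n, g n ∈ Set.univ.pi (fun j => Set.Icc (-(M' * ‖z j‖)) (M' * ‖z j‖)) := by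
    intro n j _
    have h := abs_real_inner_le_norm (u n) (z j)
    have h2 : ‖u n‖ * ‖z j‖ ≤ M' * ‖z j‖ :=
      mul_le_mul_of_nonneg_right (hu' n) (norm_nonneg _)
    have := abs_le.mp (h.trans h2)
    exact ⟨this.1, this.2⟩
  obtain ⟨a, -, φ, hφ, hconv⟩ :=
    (isCompact_univ_pi (fun j => isCompact_Icc)).tendsto_subseq hgmem
  have hcoord : ∀ j, Tendsto (fun k => ⟪u (φ k), z j⟫) atTop (𝓝 (a j)) := by
    intro j
    exact tendsto_pi_nhds.mp hconv j
  -- convergence of inner products against every element of K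
  have hcauchy : ∀ w ∈ (K : Set H), CauchySeq (fun k => ⟪u (φ k), w⟫) := by
    intro w hw
    rw [Metric.cauchySeq_iff]
    intro ε hε
    have hδ : (0 : ℝ) < ε / (3 * (M' + 1)) := by positivity
    obtain ⟨b, ⟨j, rfl⟩, hjw⟩ := Metric.mem_closure_iff.mp (hdense w hw) _ hδ
    have hcj : CauchySeq (fun k => ⟪u (φ k), z j⟫) := (hcoord j).cauchySeq
    obtain ⟨N, hN⟩ := Metric.cauchySeq_iff.mp hcj (ε / 3) (by positivity)
    refine ⟨N, fun m hm n hn => ?_⟩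
    have hsplit : ⟪u (φ m), w⟫ - ⟪u (φ n), w⟫
        = ⟪u (φ m), w - z j⟫ + (⟪u (φ m), z j⟫ - ⟪u (φ n), z j⟫) + ⟪u (φ n), z j - w⟫ := by
      simp only [inner_sub_right]; ring
    have hb1 : |⟪u (φ m), w - z j⟫| ≤ M' * ‖w - z j‖ := by
      refine (abs_real_inner_le_norm _ _).trans ?_
      exact mul_le_mul_of_nonneg_right (hu' _) (norm_nonneg _)
    have hb2 : |⟪u (φ n), z j - w⟫| ≤ M' * ‖w - z j‖ := by
      refine (abs_real_inner_le_norm _ _).trans ?_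
      rw [norm_sub_rev]
      exact mul_le_mul_of_nonneg_right (hu' _) (norm_nonneg _)
    have hwz : ‖w - z j‖ < ε / (3 * (M' + 1)) := by
      rw [← dist_eq_norm]; exact hjw
    have hMb : M' * ‖w - z j‖ < ε / 3 := by
      have h1 : M' * ‖w - z j‖ ≤ (M' + 1) * ‖w - z j‖ :=
        mul_le_mul_of_nonneg_right (by linarith) (norm_nonneg _)
      have h2 : (M' + 1) * ‖w - z j‖ < (M' + 1) * (ε / (3 * (M' + 1))) :=
        mul_lt_mul_of_pos_left hwz (by linarith)
      have h3 : (M' + 1) * (ε / (3 * (M' + 1))) = ε / 3 := by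
        field_simp
      linarith
    have hmid := hN m hm n hn
    rw [Real.dist_eq] at hmid ⊢
    calc |⟪u (φ m), w⟫ - ⟪u (φ n), w⟫|
        = |⟪u (φ m), w - z j⟫ + (⟪u (φ m), z j⟫ - ⟪u (φ n), z j⟫) + ⟪u (φ n), z j - w⟫| := by
          rw [hsplit]
      _ ≤ |⟪u (φ m), w - z j⟫| + |⟪u (φ m), z j⟫ - ⟪u (φ n), z j⟫| + |⟪u (φ n), z j - w⟫| :=
          (abs_add_le _ _).trans (by gcongr; exact abs_add_le _ _)
      _ < ε := by linarith
  -- convergence for every z via orthogonal projection onto K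
  haveI : CompleteSpace K := (Submodule.isClosed_topologicalClosure _).completeSpace_coe
  have hall : ∀ zz : H, ∃ c : ℝ, Tendsto (fun k => ⟪u (φ k), zz⟫) atTop (𝓝 c) := by
    intro zz
    set p : H := (K.orthogonalProjectionOnto zz : H) with hp
    have hpK : p ∈ K := SetLike.coe_mem _
    have heq : ∀ n, ⟪u n, zz⟫ = ⟪u n, p⟫ := by
      intro n
      have h0 : ⟪zz - p, u n⟫ = 0 := Submodule.starProjection_inner_eq_zero zz (u n) (huK n)
      rw [inner_sub_left] at h0
      have e1 := real_inner_comm zz (u n)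
      have e2 := real_inner_comm p (u n)
      linarith
    obtain ⟨c, hc⟩ := cauchySeq_tendsto_of_complete (hcauchy p hpK)
    exact ⟨c, hc.congr (fun k => (heq (φ k)).symm)⟩
  choose L hL using hall
  -- L is a bounded linear functional, represented by some x
  have hadd : ∀ a b : H, L (a + b) = L a + L b := by
    intro a b
    refine tendsto_nhds_unique (hL (a + b)) ?_
    have := (hL a).add (hL b)
    simpa only [inner_add_right] using this
  have hsmul : ∀ (r : ℝ) (a : H), L (r • a) = r * L a := by
    intro r a
    refine tendsto_nhds_unique (hL (r • a)) ?_
    have := (hL a).const_mul r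
    simpa only [real_inner_smul_right] using this
  have hbound : ∀ zz : H, |L zz| ≤ M' * ‖zz‖ := by
    intro zz
    refine le_of_tendsto (hL zz).abs (Eventually.of_forall fun k => ?_)
    refine (abs_real_inner_le_norm _ _).trans ?_
    exact mul_le_mul_of_nonneg_right (hu' _) (norm_nonneg _)
  set f : H →ₗ[ℝ] ℝ :=
    { toFun := L
      map_add' := hadd
      map_smul' := hsmul } with hf
  set F : H →L[ℝ] ℝ := f.mkContinuous M' (fun zz => by
    rw [Real.norm_eq_abs]; exact hbound zz) with hF
  obtain ⟨x, hx⟩ := (InnerProductSpace.toDual ℝ H).surjective F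
  refine ⟨φ, hφ, x, fun zz => ?_⟩
  have hxz : ⟪x, zz⟫ = L zz := by
    have := congrFun (congrArg (fun (G : H →L[ℝ] ℝ) => (G : H → ℝ)) hx) zz
    simpa [InnerProductSpace.toDual_apply_apply, hF, hf] using this
  rw [hxz]
  exact hL zz

end Aux

/-- `limsup ⟨-x̄, x_n - x̄⟩ ≤ 0` under the asymptotic condition. -/
theorem stmt_5 {H : Type*} [NormedAddCommGroup H] [InnerProductSpace ℝ H] [CompleteSpace H]
    (T : ℕ → H → H) (hT : ∀ n x y, ‖T n x - T n y‖ ≤ ‖x - y‖)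
    (u : ℕ → H)
    (hbdd : ∃ M : ℝ, ∀ n, ‖u n‖ ≤ M)
    (hres : Filter.Tendsto (fun n => ‖u n - T n (u n)‖) Filter.atTop (nhds 0))
    (hasym : ∀ φ : ℕ → ℕ, StrictMono φ → ∀ x : H,
      (∀ z : H, Filter.Tendsto (fun k => ⟪u (φ k), z⟫) Filter.atTop (nhds ⟪x, z⟫)) →
      Filter.Tendsto (fun k => u (φ k) - T (φ k) (u (φ k))) Filter.atTop (nhds 0) →
      ∀ n, T n x = x)
    (xb : H) (hxb : ∀ n, T n xb = xb)
    (hmin : ∀ y : H, (∀ n, T n y = y) → ‖xb‖ ≤ ‖y‖) :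
    Filter.limsup (fun n => ⟪-xb, u n - xb⟫) Filter.atTop ≤ 0 := by
  obtain ⟨M, hM⟩ := hbdd
  set fseq : ℕ → ℝ := fun n => ⟪-xb, u n - xb⟫ with hfseq
  -- boundedness of the real sequence
  have hfb : ∀ n, |fseq n| ≤ ‖xb‖ * (M + ‖xb‖) := by
    intro n
    refine (abs_real_inner_le_norm _ _).trans ?_
    rw [norm_neg]
    refine mul_le_mul_of_nonneg_left ?_ (norm_nonneg _)
    refine (norm_sub_le _ _).trans ?_
    linarith [hM n]
  by_contra hcon
  push_neg at hcon
  have hbdd_above : Filter.IsBoundedUnder (· ≤ ·) atTop fseq :=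
    Filter.isBoundedUnder_of ⟨‖xb‖ * (M + ‖xb‖), fun n => (le_abs_self _).trans (hfb n)⟩
  have hbdd_below : Filter.IsBoundedUnder (· ≥ ·) atTop fseq :=
    Filter.isBoundedUnder_of ⟨-(‖xb‖ * (M + ‖xb‖)), fun n => (neg_le_of_abs_le (hfb n))⟩
  set Lsup := Filter.limsup fseq atTop with hLsup
  have hLpos : 0 < Lsup := hcon
  have hfreq : ∃ᶠ n in atTop, Lsup / 2 < fseq n :=
    Filter.frequently_lt_of_lt_limsup hbdd_below.isCoboundedUnder_le (by linarith)
  obtain ⟨φ, hφ, hφf⟩ := Filter.extraction_of_frequently_atTop hfreq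
  -- weak compactness on the subsequence
  obtain ⟨ψ, hψ, x, hweak⟩ := exists_weak_subseq (fun k => u (φ k)) M (fun k => hM _)
  set θ : ℕ → ℕ := fun k => φ (ψ k) with hθ
  have hθmono : StrictMono θ := hφ.comp hψ
  -- the residuals along θ tend to zero
  have hres0 : Tendsto (fun n => u n - T n (u n)) atTop (𝓝 0) :=
    tendsto_zero_iff_norm_tendsto_zero.mpr hres
  have hresθ : Tendsto (fun k => u (θ k) - T (θ k) (u (θ k))) atTop (𝓝 0) :=
    hres0.comp hθmono.tendsto_atTop
  -- the weak limit is a common fixed point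
  have hxS : ∀ n, T n x = x := by
    refine hasym θ hθmono x (fun z => ?_) hresθ
    exact hweak z
  -- minimality gives the variational inequality
  have hvar : 0 ≤ ⟪xb, x - xb⟫ := by
    set I := ⟪xb, x - xb⟫ with hI
    set C := ‖x - xb‖ ^ 2 with hC
    have hstep : ∀ t : ℝ, 0 < t → t ≤ 1 → 0 ≤ 2 * I + t * C := by
      intro t ht0 ht1
      have hfix : ∀ n, T n (xb + t • (x - xb)) = xb + t • (x - xb) :=
        fun n => fix_convex (T n) (hT n) xb x (hxb n) (hxS n) t ht0.le ht1
      have hle := hmin _ hfix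
      have hsq : ‖xb‖ ^ 2 ≤ ‖xb + t • (x - xb)‖ ^ 2 :=
        pow_le_pow_left₀ (norm_nonneg _) hle 2
      have hexp : ‖xb + t • (x - xb)‖ ^ 2 = ‖xb‖ ^ 2 + 2 * t * I + t ^ 2 * C := by
        rw [norm_add_sq_real, real_inner_smul_right, norm_smul, Real.norm_eq_abs, mul_pow,
          sq_abs, hI, hC]
        ring
      rw [hexp] at hsq
      nlinarith
    -- let t → 0
    have htend : Tendsto (fun n : ℕ => 2 * I + (1 / (n + 1)) * C) atTop (𝓝 (2 * I)) := by
      have h1 : Tendsto (fun n : ℕ => (1 / (n + 1) : ℝ)) atTop (𝓝 0) :=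
        tendsto_one_div_add_atTop_nhds_zero_nat
      have := (h1.mul_const C).const_add (2 * I)
      simpa using this
    have h0le : 0 ≤ 2 * I :=
      ge_of_tendsto' htend (fun n => by
        refine hstep (1 / (n + 1)) (by positivity) ?_
        rw [div_le_one (by positivity)]
        linarith [Nat.cast_nonneg (α := ℝ) n])
    linarith
  -- the inner products along θ converge to ⟪-xb, x - xb⟫ ≤ 0
  have htendf : Tendsto (fun k => fseq (θ k)) atTop (𝓝 ⟪-xb, x - xb⟫) := by
    have h1 : Tendsto (fun k => ⟪u (θ k), -xb⟫) atTop (𝓝 ⟪x, -xb⟫) := hweak (-xb)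
    have heq : ∀ n, fseq n = ⟪u n, -xb⟫ - ⟪xb, -xb⟫ := by
      intro n
      rw [hfseq]
      simp only [inner_sub_right]
      rw [real_inner_comm (u n) (-xb)]
      ring_nf
      rw [real_inner_comm xb (-xb)]
    have h2 : Tendsto (fun k => ⟪u (θ k), -xb⟫ - ⟪xb, -xb⟫) atTop
        (𝓝 (⟪x, -xb⟫ - ⟪xb, -xb⟫)) := h1.sub_const _
    have h3 : ⟪x, -xb⟫ - ⟪xb, -xb⟫ = ⟪-xb, x - xb⟫ := by
      rw [inner_sub_right, real_inner_comm x (-xb), real_inner_comm xb (-xb)]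
    rw [← h3]
    exact h2.congr (fun k => (heq (θ k)).symm)
  have hge : Lsup / 2 ≤ ⟪-xb, x - xb⟫ :=
    ge_of_tendsto' htendf (fun k => (hφf (ψ k)).le)
  have hle0 : ⟪-xb, x - xb⟫ ≤ 0 := by
    rw [inner_neg_left]
    linarith
  linarith
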